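/- For set partitions A of [n] and B of [m] and any n-element subset S of [n+m], the atomic length satisfies ℓ((A↑_S ∪ B↑_{S^c})^!) ≤ ℓ(A^!) + ℓ(B^!), with equality if and only if (A↑_S ∪ B↑_{S^c})^! is a shuffle of the words A^! and B^!. -/

import Mathlib

open scoped Classical
noncomputable section

/-- The ground set `[n] = {1, …, n}`. -/
def ground (n : ℕ) : Finset ℕ := Finset.Icc 1 n

/-- `A` is a set partition of `[n]`. -/
def IsSetPartition (n : ℕ) (A : Finset (Finset ℕ)) : Prop :=
  (∀ B ∈ A, B.Nonempty) ∧
  (∀ B ∈ A, ∀ C ∈ A, B ≠ C → Disjoint B C) ∧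
  A.sup id = ground n

/-- Shift every entry of every part by `n`. -/
def shiftP (n : ℕ) (A : Finset (Finset ℕ)) : Finset (Finset ℕ) :=
  A.image (fun B => B.image (· + n))

/-- Shifted concatenation `A|B` of a set partition `A ⊢ [n]` with `B`. -/
def concatP (n : ℕ) (A B : Finset (Finset ℕ)) : Finset (Finset ℕ) :=
  A ∪ shiftP n B

/-- `A` is an atomic set partition of `[n]`: nonempty and not a nontrivial
shifted concatenation. -/
def AtomicP (n : ℕ) (A : Finset (Finset ℕ)) : Prop :=
  IsSetPartition n A ∧ 0 < n ∧
  ¬ ∃ k B C, 0 < k ∧ k < n ∧ IsSetPartition k B ∧ IsSetPartition (n - k) C ∧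
      A = concatP k B C

/-- Shifted concatenation of a list of (size, set partition) pairs. -/
def concatListP : List (ℕ × Finset (Finset ℕ)) → ℕ × Finset (Finset ℕ)
  | [] => (0, ∅)
  | p :: L => ((concatListP L).1 + p.1, concatP p.1 p.2 (concatListP L).2)

/-- `L` is the atomic factorization `A^!` of the set partition `A ⊢ [n]`. -/
def AtomicFactorization (n : ℕ) (A : Finset (Finset ℕ))
    (L : List (ℕ × Finset (Finset ℕ))) : Prop :=
  (∀ p ∈ L, AtomicP p.1 p.2) ∧ concatListP L = (n, A)

/-- The Bell number: the number of set partitions of `[n]`. -/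
def bell (n : ℕ) : ℕ := Nat.card {A : Finset (Finset ℕ) // IsSetPartition n A}

/-- Stirling numbers of the second kind: set partitions of `[n]` into `k` parts. -/
def stirling2 (n k : ℕ) : ℕ :=
  Nat.card {A : Finset (Finset ℕ) // IsSetPartition n A ∧ A.card = k}

/-- The number of atomic set partitions of `[n]` into `k` parts. -/
def atomCount (n k : ℕ) : ℕ :=
  Nat.card {A : Finset (Finset ℕ) // AtomicP n A ∧ A.card = k}

/-- The number of atomic set partitions of `[n]`. -/
def atomCount' (n : ℕ) : ℕ := Nat.card {A : Finset (Finset ℕ) // AtomicP n A}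

/-- Refinement order: `A ≤ B` iff every part of `A` is contained in a part of `B`. -/
def refines (A B : Finset (Finset ℕ)) : Prop := ∀ a ∈ A, ∃ b ∈ B, a ⊆ b

/-- The meet `A ∧ B` of two set partitions. -/
def meetP (A B : Finset (Finset ℕ)) : Finset (Finset ℕ) :=
  ((A ×ˢ B).image fun p => p.1 ∩ p.2).filter (·.Nonempty)

/-- The set partition `{[n]}` with a single part (empty if `n = 0`). -/
def onePartP (n : ℕ) : Finset (Finset ℕ) := if n = 0 then ∅ else {ground n}

/-- The finite set of set partitions of `[n]` satisfying a predicate `P`. -/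
def SPs (n : ℕ) (P : Finset (Finset ℕ) → Prop) : Finset (Finset (Finset ℕ)) :=
  (ground n).powerset.powerset.filter fun A => IsSetPartition n A ∧ P A

/-- Covering relation for `≤_*`: `B` covers `A` if `B` is obtained from `A` by merging two
parts `a, a'` with every element of `a` smaller than every element of `a'`. -/
def coverStar (A B : Finset (Finset ℕ)) : Prop :=
  ∃ a ∈ A, ∃ a' ∈ A, a ≠ a' ∧ (∀ x ∈ a, ∀ y ∈ a', x < y) ∧
    B = insert (a ∪ a') ((A.erase a).erase a')

/-- The order `≤_*` on set partitions. -/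
def leStar : Finset (Finset ℕ) → Finset (Finset ℕ) → Prop :=
  Relation.ReflTransGen coverStar

/-- Restriction `A↓_S` of a set partition to the entries in `S`. -/
def restrictP (A : Finset (Finset ℕ)) (S : Finset ℕ) : Finset (Finset ℕ) :=
  (A.image (· ∩ S)).filter (·.Nonempty)

/-- The standardization map of a finite set `S`: sends the `i`-th smallest element of `S`
to `i` (1-indexed). -/
def stMap (S : Finset ℕ) (x : ℕ) : ℕ := (S.filter (· ≤ x)).card

/-- Standardization of a set partition: relabel its entries to `{1,…,m}` preserving order. -/
def stdP (A : Finset (Finset ℕ)) : Finset (Finset ℕ) :=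
  A.image fun b => b.image (stMap (A.sup id))

/-- The map raising `{1,…,|S|}` order-preservingly onto `S`. -/
def raiseMap (S : Finset ℕ) (x : ℕ) : ℕ := (S.sort (· ≤ ·)).getD (x - 1) 0

/-- `A↑_S`: raise the entries of `A` order-preservingly so the ground set becomes `S`. -/
def raiseP (S : Finset ℕ) (A : Finset (Finset ℕ)) : Finset (Finset ℕ) :=
  A.image fun b => b.image (raiseMap S)

/-- `IsShuffle l₁ l₂ l`: `l` is a shuffle (interleaving) of `l₁` and `l₂`. -/
inductive IsShuffle {α : Type*} : List α → List α → List α → Prop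
  | nil : IsShuffle [] [] []
  | left {a : α} {l₁ l₂ l : List α} : IsShuffle l₁ l₂ l → IsShuffle (a :: l₁) l₂ (a :: l)
  | right {a : α} {l₁ l₂ l : List α} : IsShuffle l₁ l₂ l → IsShuffle l₁ (a :: l₂) (a :: l)

/-- A word is Lyndon if it is nonempty and lexicographically strictly smaller than all of
its proper cyclic rotations. -/
def LyndonWord {α : Type*} (lt : α → α → Prop) (w : List α) : Prop :=
  w ≠ [] ∧ ∀ i, 0 < i → i < w.length → List.Lex lt w (w.rotate i)

/-- A set partition is Lyndon (with respect to a total order `lt` on atomic set partitions)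
if its atomic factorization is a Lyndon word. -/
def LyndonPartition (lt : ℕ × Finset (Finset ℕ) → ℕ × Finset (Finset ℕ) → Prop)
    (n : ℕ) (A : Finset (Finset ℕ)) : Prop :=
  ∃ L, AtomicFactorization n A L ∧ LyndonWord lt L

/-! ### Set compositions -/

/-- `Φ` is a set composition of `[n]`: an ordered sequence of nonempty pairwise disjoint
sets whose union is `[n]`. -/
def IsSetComposition (n : ℕ) (Φ : List (Finset ℕ)) : Prop :=
  (∀ B ∈ Φ, B.Nonempty) ∧ Φ.Pairwise Disjoint ∧ Φ.foldr (· ∪ ·) ∅ = ground n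

/-- Shift every entry of every part of a set composition by `n`. -/
def shiftC (n : ℕ) (Φ : List (Finset ℕ)) : List (Finset ℕ) :=
  Φ.map (·.image (· + n))

/-- Shifted concatenation `Φ|Ψ` of set compositions, `Φ ⊨ [n]`. -/
def concatC (n : ℕ) (Φ Ψ : List (Finset ℕ)) : List (Finset ℕ) := Φ ++ shiftC n Ψ

/-- An atomic set composition: nonempty and not a nontrivial shifted concatenation. -/
def AtomicC (n : ℕ) (Φ : List (Finset ℕ)) : Prop :=
  IsSetComposition n Φ ∧ 0 < n ∧
  ¬ ∃ k Ψ Γ, 0 < k ∧ k < n ∧ IsSetComposition k Ψ ∧ IsSetComposition (n - k) Γ ∧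
      Φ = concatC k Ψ Γ

/-- Shifted concatenation of a list of (size, set composition) pairs. -/
def concatListC : List (ℕ × List (Finset ℕ)) → ℕ × List (Finset ℕ)
  | [] => (0, [])
  | p :: L => ((concatListC L).1 + p.1, concatC p.1 p.2 (concatListC L).2)

/-- `L` is the atomic factorization `Φ^!` of the set composition `Φ ⊨ [n]`. -/
def AtomicFactorizationC (n : ℕ) (Φ : List (Finset ℕ))
    (L : List (ℕ × List (Finset ℕ))) : Prop :=
  (∀ p ∈ L, AtomicC p.1 p.2) ∧ concatListC L = (n, Φ)

/-- Covering relation for `≤_*` on set compositions: merge two adjacent parts `a, b` with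
every element of `a` smaller than every element of `b`. -/
def coverStarC (Φ Ψ : List (Finset ℕ)) : Prop :=
  ∃ L₁ a b L₂, Φ = L₁ ++ a :: b :: L₂ ∧ (∀ x ∈ a, ∀ y ∈ b, x < y) ∧
    Ψ = L₁ ++ (a ∪ b) :: L₂

/-- The order `≤_*` on set compositions. -/
def leStarC : List (Finset ℕ) → List (Finset ℕ) → Prop :=
  Relation.ReflTransGen coverStarC

/-- The meet operation `Φ ∧ Ψ` on set compositions: the nonempty intersections
`Φ_i ∩ Ψ_j` in lexicographic order of `(i, j)`. -/
def meetC (Φ Ψ : List (Finset ℕ)) : List (Finset ℕ) :=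
  (Φ.flatMap fun a => Ψ.map fun b => a ∩ b).filter (·.Nonempty)

/-- The one-part set composition `([n])` (empty if `n = 0`). -/
def onePartC (n : ℕ) : List (Finset ℕ) := if n = 0 then [] else [ground n]

/-- Lists of length `k` with all entries in `s`. -/
def listsOfLen (s : Finset (Finset ℕ)) : ℕ → Finset (List (Finset ℕ))
  | 0 => {[]}
  | k + 1 => (s ×ˢ listsOfLen s k).image fun p => p.1 :: p.2

/-- The finite set of set compositions of `[n]` satisfying a predicate `P`. -/
def SCs (n : ℕ) (P : List (Finset ℕ) → Prop) : Finset (List (Finset ℕ)) :=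
  ((Finset.range (n + 1)).biUnion fun k => listsOfLen (ground n).powerset k).filter
    fun Φ => IsSetComposition n Φ ∧ P Φ

/-- `Φ↑_S`: raise the entries of a set composition order-preservingly into `S`. -/
def raiseC (S : Finset ℕ) (Φ : List (Finset ℕ)) : List (Finset ℕ) :=
  Φ.map (·.image (raiseMap S))

/-- Standardization of a set composition. -/
def stdC (Φ : List (Finset ℕ)) : List (Finset ℕ) :=
  Φ.map (·.image (stMap (Φ.foldr (· ∪ ·) ∅)))

/-- `α(Φ)`: the composition of part sizes of `Φ`. -/
def alphaC (Φ : List (Finset ℕ)) : List ℕ := Φ.map Finset.card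

/-- The order `≤_#` on set compositions: `Φ ≤_# Ψ` iff `α(Φ) = α(Ψ)` and each atomic factor
of `Φ` is the standardization of the corresponding consecutive block of parts of `Ψ`. -/
def leSharp (Φ Ψ : List (Finset ℕ)) : Prop :=
  alphaC Φ = alphaC Ψ ∧
  ∃ (L : List (ℕ × List (Finset ℕ))) (Bs : List (List (Finset ℕ))),
    (∀ p ∈ L, AtomicC p.1 p.2) ∧ (concatListC L).2 = Φ ∧
    Ψ = Bs.flatten ∧ List.Forall₂ (fun b (l : ℕ × List (Finset ℕ)) => stdC b = l.2) Bs L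

/-! ### Index types -/

/-- Set partitions with their sizes. -/
abbrev SPIdx := {x : ℕ × Finset (Finset ℕ) // IsSetPartition x.1 x.2}

/-- Atomic set partitions with their sizes. -/
abbrev AtomIdx := {x : ℕ × Finset (Finset ℕ) // AtomicP x.1 x.2}

/-- Set compositions with their sizes. -/
abbrev SCIdx := {x : ℕ × List (Finset ℕ) // IsSetComposition x.1 x.2}

/-- Atomic set compositions with their sizes. -/
abbrev AtomCIdx := {x : ℕ × List (Finset ℕ) // AtomicC x.1 x.2}

namespace SP14

open Finset

lemma mem_ground {n x : ℕ} : x ∈ ground n ↔ 1 ≤ x ∧ x ≤ n := by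
  simp [ground, Finset.mem_Icc]

lemma block_subset {n : ℕ} {A : Finset (Finset ℕ)} (hA : IsSetPartition n A)
    {b : Finset ℕ} (hb : b ∈ A) : b ⊆ ground n := by
  have h := Finset.le_sup (f := id) hb
  rw [hA.2.2] at h
  exact h

lemma part_pos {n : ℕ} {A : Finset (Finset ℕ)} (hA : IsSetPartition n A) :
    ∀ b ∈ A, ∀ x ∈ b, 1 ≤ x := fun b hb x hx => (mem_ground.mp (block_subset hA hb hx)).1

lemma part_le {n : ℕ} {A : Finset (Finset ℕ)} (hA : IsSetPartition n A) :
    ∀ b ∈ A, ∀ x ∈ b, x ≤ n := fun b hb x hx => (mem_ground.mp (block_subset hA hb hx)).2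

lemma exists_block {n : ℕ} {A : Finset (Finset ℕ)} (hA : IsSetPartition n A)
    {x : ℕ} (hx : x ∈ ground n) : ∃ b ∈ A, x ∈ b := by
  rw [← hA.2.2] at hx
  simpa using Finset.mem_sup.mp hx

lemma sup_eq_ground_iff {n : ℕ} {A : Finset (Finset ℕ)} :
    A.sup id = ground n ↔ ∀ x, (∃ b ∈ A, x ∈ b) ↔ (1 ≤ x ∧ x ≤ n) := by
  constructor
  · intro h x
    have hx : x ∈ A.sup id ↔ ∃ b ∈ A, x ∈ b := by simpa using Finset.mem_sup
    rw [← hx, h, mem_ground]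
  · intro h
    ext x
    rw [Finset.mem_sup, mem_ground]
    simpa using h x

/-- `k` is a split point of the set partition `C`. -/
def SplitAt (C : Finset (Finset ℕ)) (k : ℕ) : Prop :=
  ∀ b ∈ C, (∀ x ∈ b, x ≤ k) ∨ (∀ x ∈ b, k < x)

lemma splitAt_union {X Y : Finset (Finset ℕ)} {k : ℕ} :
    SplitAt (X ∪ Y) k ↔ SplitAt X k ∧ SplitAt Y k := by
  unfold SplitAt
  constructor
  · exact fun h => ⟨fun b hb => h b (Finset.mem_union_left _ hb),
      fun b hb => h b (Finset.mem_union_right _ hb)⟩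
  · rintro ⟨h1, h2⟩ b hb
    rcases Finset.mem_union.mp hb with hb | hb
    · exact h1 b hb
    · exact h2 b hb

lemma splitAt_zero {C : Finset (Finset ℕ)} (h : ∀ b ∈ C, ∀ x ∈ b, 1 ≤ x) : SplitAt C 0 :=
  fun b hb => Or.inr fun x hx => h b hb x hx

lemma splitAt_of_le {C : Finset (Finset ℕ)} {k s : ℕ} (h : ∀ b ∈ C, ∀ x ∈ b, x ≤ k)
    (hks : k ≤ s) : SplitAt C s :=
  fun b hb => Or.inl fun x hx => le_trans (h b hb x hx) hks

lemma mem_image_add {k : ℕ} {b : Finset ℕ} {y : ℕ} :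
    y ∈ b.image (· + k) ↔ ∃ x ∈ b, x + k = y := Finset.mem_image

lemma splitAt_shift_low {k : ℕ} {C : Finset (Finset ℕ)} {s : ℕ}
    (hC : ∀ b ∈ C, ∀ x ∈ b, 1 ≤ x) (hs : s ≤ k) : SplitAt (shiftP k C) s := by
  intro b hb
  rcases Finset.mem_image.mp hb with ⟨c, hc, rfl⟩
  refine Or.inr fun y hy => ?_
  rcases Finset.mem_image.mp hy with ⟨x, hx, rfl⟩
  have := hC c hc x hx
  omega

lemma splitAt_shift {k : ℕ} {C : Finset (Finset ℕ)} {s : ℕ} (hks : k ≤ s) :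
    SplitAt (shiftP k C) s ↔ SplitAt C (s - k) := by
  constructor
  · intro h b hb
    rcases h (b.image (· + k)) (Finset.mem_image_of_mem _ hb) with h' | h'
    · refine Or.inl fun x hx => ?_
      have := h' (x + k) (Finset.mem_image_of_mem _ hx); omega
    · refine Or.inr fun x hx => ?_
      have := h' (x + k) (Finset.mem_image_of_mem _ hx); omega
  · intro h b hb
    rcases Finset.mem_image.mp hb with ⟨c, hc, rfl⟩
    rcases h c hc with h' | h'
    · refine Or.inl fun y hy => ?_
      rcases Finset.mem_image.mp hy with ⟨x, hx, rfl⟩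
      have := h' x hx; omega
    · refine Or.inr fun y hy => ?_
      rcases Finset.mem_image.mp hy with ⟨x, hx, rfl⟩
      have := h' x hx; omega

lemma concatP_isPartition {k N' : ℕ} {a C : Finset (Finset ℕ)}
    (ha : IsSetPartition k a) (hC : IsSetPartition N' C) :
    IsSetPartition (N' + k) (concatP k a C) := by
  refine ⟨?_, ?_, ?_⟩
  · intro b hb
    rcases Finset.mem_union.mp hb with hb | hb
    · exact ha.1 b hb
    · rcases Finset.mem_image.mp hb with ⟨c, hc, rfl⟩
      exact (hC.1 c hc).image _
  · intro b hb c hc hbc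
    rcases Finset.mem_union.mp hb with hb | hb <;> rcases Finset.mem_union.mp hc with hc | hc
    · exact ha.2.1 b hb c hc hbc
    · rcases Finset.mem_image.mp hc with ⟨c₀, hc₀, rfl⟩
      rw [Finset.disjoint_left]
      intro x hxb hxc
      rcases Finset.mem_image.mp hxc with ⟨y, hy, rfl⟩
      have h1 := part_le ha b hb _ hxb
      have h2 := part_pos hC c₀ hc₀ y hy
      omega
    · rcases Finset.mem_image.mp hb with ⟨b₀, hb₀, rfl⟩
      rw [Finset.disjoint_left]
      intro x hxb hxc
      rcases Finset.mem_image.mp hxb with ⟨y, hy, rfl⟩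
      have h1 := part_le ha c hc _ hxc
      have h2 := part_pos hC b₀ hb₀ y hy
      omega
    · rcases Finset.mem_image.mp hb with ⟨b₀, hb₀, rfl⟩
      rcases Finset.mem_image.mp hc with ⟨c₀, hc₀, rfl⟩
      have hb₀c₀ : b₀ ≠ c₀ := fun h => hbc (by rw [h])
      have hd := hC.2.1 b₀ hb₀ c₀ hc₀ hb₀c₀
      rw [Finset.disjoint_left] at hd ⊢
      intro x hxb hxc
      rcases Finset.mem_image.mp hxb with ⟨y, hy, rfl⟩
      rcases Finset.mem_image.mp hxc with ⟨z, hz, hzy⟩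
      have : z = y := by omega
      exact hd hy (this ▸ hz)
  · rw [sup_eq_ground_iff]
    intro x
    constructor
    · rintro ⟨b, hb, hxb⟩
      rcases Finset.mem_union.mp hb with hb | hb
      · have h1 := part_pos ha b hb x hxb
        have h2 := part_le ha b hb x hxb
        omega
      · rcases Finset.mem_image.mp hb with ⟨c, hc, rfl⟩
        rcases Finset.mem_image.mp hxb with ⟨y, hy, rfl⟩
        have h1 := part_pos hC c hc y hy
        have h2 := part_le hC c hc y hy
        omega
    · rintro ⟨hx1, hx2⟩
      by_cases hxk : x ≤ k
      · rcases exists_block ha (mem_ground.mpr ⟨hx1, hxk⟩) with ⟨b, hb, hxb⟩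
        exact ⟨b, Finset.mem_union_left _ hb, hxb⟩
      · push_neg at hxk
        rcases exists_block hC (mem_ground.mpr (by omega : 1 ≤ x - k ∧ x - k ≤ N')) with ⟨b, hb, hxb⟩
        refine ⟨b.image (· + k), Finset.mem_union_right _ (Finset.mem_image_of_mem _ hb), ?_⟩
        exact Finset.mem_image.mpr ⟨x - k, hxb, by omega⟩

lemma concatListP_isPartition {L : List (ℕ × Finset (Finset ℕ))}
    (h : ∀ p ∈ L, AtomicP p.1 p.2) :
    IsSetPartition (concatListP L).1 (concatListP L).2 := by
  induction L with
  | nil =>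
      refine ⟨by simp [concatListP], by simp [concatListP], ?_⟩
      simp [concatListP, ground]
  | cons p L ih =>
      exact concatP_isPartition (h p List.mem_cons_self).1
        (ih fun q hq => h q (List.mem_cons_of_mem p hq))

end SP14


namespace SP14

open Finset

lemma unshift_shift {k : ℕ} {D : Finset (Finset ℕ)} :
    (shiftP k D).image (fun b => b.image (· - k)) = D := by
  rw [shiftP, Finset.image_image]
  have : ∀ b : Finset ℕ, ((b.image (· + k)).image (· - k)) = b := by
    intro b
    rw [Finset.image_image]
    have : ((· - k) ∘ (· + k)) = (id : ℕ → ℕ) := by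
      funext x; simp
    rw [this, Finset.image_id]
  calc D.image ((fun b => Finset.image (· - k) b) ∘ fun B => Finset.image (· + k) B)
      = D.image id := by
        apply Finset.image_congr
        intro b _
        exact this b
    _ = D := Finset.image_id

lemma shift_of_high {k : ℕ} {b : Finset ℕ} (h : ∀ x ∈ b, k < x) :
    (b.image (· - k)).image (· + k) = b := by
  rw [Finset.image_image]
  have : ∀ x ∈ b, ((· + k) ∘ (· - k)) x = id x := by
    intro x hx; have := h x hx; simp; omega
  rw [Finset.image_congr this, Finset.image_id]

lemma atomic_no_splitAt {n s : ℕ} {a : Finset (Finset ℕ)} (ha : AtomicP n a)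
    (hs : SplitAt a s) (h1 : 0 < s) (h2 : s < n) : False := by
  obtain ⟨hap, hn, hno⟩ := ha
  apply hno
  refine ⟨s, a.filter (fun b => ∀ x ∈ b, x ≤ s),
    (a.filter (fun b => ∀ x ∈ b, s < x)).image (fun b => b.image (· - s)), h1, h2, ?_, ?_, ?_⟩
  · -- IsSetPartition s B
    refine ⟨fun b hb => hap.1 b (Finset.mem_filter.mp hb).1,
      fun b hb c hc hbc => hap.2.1 b (Finset.mem_filter.mp hb).1 c (Finset.mem_filter.mp hc).1 hbc, ?_⟩
    rw [sup_eq_ground_iff]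
    intro x
    constructor
    · rintro ⟨b, hb, hxb⟩
      obtain ⟨hba, hble⟩ := Finset.mem_filter.mp hb
      exact ⟨part_pos hap b hba x hxb, hble x hxb⟩
    · rintro ⟨hx1, hx2⟩
      rcases exists_block hap (mem_ground.mpr ⟨hx1, by omega⟩) with ⟨b, hb, hxb⟩
      rcases hs b hb with h' | h'
      · exact ⟨b, Finset.mem_filter.mpr ⟨hb, h'⟩, hxb⟩
      · exact absurd (h' x hxb) (by omega)
  · -- IsSetPartition (n - s) C
    refine ⟨?_, ?_, ?_⟩
    · intro b hb
      rcases Finset.mem_image.mp hb with ⟨c, hc, rfl⟩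
      exact (hap.1 c (Finset.mem_filter.mp hc).1).image _
    · intro b hb c hc hbc
      rcases Finset.mem_image.mp hb with ⟨b₀, hb₀, rfl⟩
      rcases Finset.mem_image.mp hc with ⟨c₀, hc₀, rfl⟩
      obtain ⟨hb₀a, hb₀hi⟩ := Finset.mem_filter.mp hb₀
      obtain ⟨hc₀a, hc₀hi⟩ := Finset.mem_filter.mp hc₀
      have hb₀c₀ : b₀ ≠ c₀ := fun h => hbc (by rw [h])
      have hd := hap.2.1 b₀ hb₀a c₀ hc₀a hb₀c₀
      rw [Finset.disjoint_left] at hd ⊢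
      intro x hxb hxc
      rcases Finset.mem_image.mp hxb with ⟨y, hy, rfl⟩
      rcases Finset.mem_image.mp hxc with ⟨z, hz, hzy⟩
      have h3 := hb₀hi y hy
      have h4 := hc₀hi z hz
      have : z = y := by omega
      exact hd hy (this ▸ hz)
    · rw [sup_eq_ground_iff]
      intro x
      constructor
      · rintro ⟨b, hb, hxb⟩
        rcases Finset.mem_image.mp hb with ⟨c, hc, rfl⟩
        obtain ⟨hca, hchi⟩ := Finset.mem_filter.mp hc
        rcases Finset.mem_image.mp hxb with ⟨y, hy, rfl⟩
        have h3 := hchi y hy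
        have h4 := part_le hap c hca y hy
        omega
      · rintro ⟨hx1, hx2⟩
        rcases exists_block hap (mem_ground.mpr (by omega : 1 ≤ x + s ∧ x + s ≤ n)) with ⟨b, hb, hxb⟩
        rcases hs b hb with h' | h'
        · exact absurd (h' (x + s) hxb) (by omega)
        · refine ⟨b.image (· - s), Finset.mem_image_of_mem _ (Finset.mem_filter.mpr ⟨hb, h'⟩), ?_⟩
          exact Finset.mem_image.mpr ⟨x + s, hxb, by omega⟩
  · -- a = concatP s B C
    have hshift : shiftP s ((a.filter (fun b => ∀ x ∈ b, s < x)).image (fun b => b.image (· - s)))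
        = a.filter (fun b => ∀ x ∈ b, s < x) := by
      rw [shiftP, Finset.image_image]
      have : ∀ b ∈ a.filter (fun b => ∀ x ∈ b, s < x),
          ((fun B => Finset.image (· + s) B) ∘ fun b => Finset.image (· - s) b) b = id b := by
        intro b hb
        exact shift_of_high (Finset.mem_filter.mp hb).2
      rw [Finset.image_congr this, Finset.image_id]
    rw [concatP, hshift]
    ext b
    simp only [Finset.mem_union, Finset.mem_filter]
    constructor
    · intro hb
      rcases hs b hb with h' | h'
      · exact Or.inl ⟨hb, h'⟩
      · exact Or.inr ⟨hb, h'⟩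
    · rintro (⟨hb, _⟩ | ⟨hb, _⟩) <;> exact hb

/-- The set of split points encoded by a factorization. -/
def splitSet : List (ℕ × Finset (Finset ℕ)) → Finset ℕ
  | [] => {0}
  | p :: L => insert 0 ((splitSet L).image (· + p.1))

lemma zero_mem_splitSet (L : List (ℕ × Finset (Finset ℕ))) : 0 ∈ splitSet L := by
  cases L <;> simp [splitSet]

lemma card_splitSet {L : List (ℕ × Finset (Finset ℕ))} (h : ∀ p ∈ L, AtomicP p.1 p.2) :
    (splitSet L).card = L.length + 1 := by
  induction L with
  | nil => simp [splitSet]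
  | cons p L ih =>
      have hp := (h p List.mem_cons_self).2.1
      have hnotmem : 0 ∉ (splitSet L).image (· + p.1) := by
        intro hmem
        rcases Finset.mem_image.mp hmem with ⟨t, _, ht⟩
        omega
      rw [splitSet, Finset.card_insert_of_notMem hnotmem,
        Finset.card_image_of_injective _ (add_left_injective p.1),
        ih fun q hq => h q (List.mem_cons_of_mem p hq)]
      simp

lemma splits_eq_splitSet {L : List (ℕ × Finset (Finset ℕ))}
    (h : ∀ p ∈ L, AtomicP p.1 p.2) :
    (Finset.Icc 0 (concatListP L).1).filter (fun s => SplitAt (concatListP L).2 s)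
      = splitSet L := by
  induction L with
  | nil =>
      ext s
      simp [concatListP, splitSet, SplitAt]
  | cons p L ih =>
      have hp := h p List.mem_cons_self
      have hL : ∀ q ∈ L, AtomicP q.1 q.2 := fun q hq => h q (List.mem_cons_of_mem p hq)
      have hC₂ := concatListP_isPartition hL
      have hk : 0 < p.1 := hp.2.1
      ext s
      simp only [concatListP, Finset.mem_filter, Finset.mem_Icc, splitAt_union, splitSet,
        Finset.mem_insert, Finset.mem_image, concatP]
      rw [← ih hL]
      simp only [Finset.mem_filter, Finset.mem_Icc]
      constructor
      · rintro ⟨⟨-, hsle⟩, hsa, hsh⟩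
        by_cases hs0 : s = 0
        · exact Or.inl hs0
        · have hks : p.1 ≤ s := by
            by_contra hc
            push_neg at hc
            exact atomic_no_splitAt hp hsa (by omega) hc
          refine Or.inr ⟨s - p.1, ⟨⟨by omega, by omega⟩, ?_⟩, by omega⟩
          exact (splitAt_shift hks).mp hsh
      · rintro (rfl | ⟨t, ⟨⟨-, htle⟩, hts⟩, rfl⟩)
        · refine ⟨⟨le_refl _, by omega⟩, ?_, ?_⟩
          · exact splitAt_zero (part_pos hp.1)
          · exact splitAt_shift_low (part_pos hC₂) (by omega)
        · refine ⟨⟨by omega, by omega⟩, ?_, ?_⟩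
          · exact splitAt_of_le (part_le hp.1) (by omega)
          · rw [splitAt_shift (by omega)]
            have : t + p.1 - p.1 = t := by omega
            rw [this]
            exact hts

lemma head_filter_eq {k : ℕ} {a D : Finset (Finset ℕ)}
    (hapos : ∀ b ∈ a, ∀ x ∈ b, x ≤ k)
    (hDne : ∀ b ∈ D, b.Nonempty) (hDpos : ∀ b ∈ D, ∀ x ∈ b, 1 ≤ x) :
    (a ∪ shiftP k D).filter (fun b => ∀ x ∈ b, x ≤ k) = a ∧
    ((a ∪ shiftP k D).filter (fun b => ¬ ∀ x ∈ b, x ≤ k)).image (fun b => b.image (· - k)) = D := by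
  have hshiftnot : ∀ b ∈ shiftP k D, ¬ ∀ x ∈ b, x ≤ k := by
    intro b hb hall
    rcases Finset.mem_image.mp hb with ⟨c, hc, rfl⟩
    rcases hDne c hc with ⟨y, hy⟩
    have h1 := hDpos c hc y hy
    have h2 := hall (y + k) (Finset.mem_image_of_mem _ hy)
    omega
  constructor
  · rw [Finset.filter_union, Finset.filter_true_of_mem hapos,
      Finset.filter_false_of_mem hshiftnot, Finset.union_empty]
  · rw [Finset.filter_union, Finset.filter_false_of_mem (fun b hb h => h (hapos b hb)),
      Finset.filter_true_of_mem hshiftnot, Finset.empty_union, unshift_shift]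

end SP14


namespace SP14

open Finset

lemma stMap_mono {S : Finset ℕ} : Monotone (stMap S) := by
  intro j k hjk
  apply Finset.card_le_card
  intro x hx
  rw [Finset.mem_filter] at hx ⊢
  exact ⟨hx.1, le_trans hx.2 hjk⟩

lemma stMap_le_card {S : Finset ℕ} (k : ℕ) : stMap S k ≤ S.card :=
  Finset.card_le_card (Finset.filter_subset _ _)

lemma stMap_le_self {S : Finset ℕ} (hpos : ∀ x ∈ S, 1 ≤ x) (k : ℕ) : stMap S k ≤ k := by
  have h : S.filter (· ≤ k) ⊆ Finset.Icc 1 k := by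
    intro x hx
    rw [Finset.mem_filter] at hx
    exact Finset.mem_Icc.mpr ⟨hpos x hx.1, hx.2⟩
  calc stMap S k ≤ (Finset.Icc 1 k).card := Finset.card_le_card h
    _ = k := by rw [Nat.card_Icc]; omega

lemma stMap_zero {S : Finset ℕ} (hpos : ∀ x ∈ S, 1 ≤ x) : stMap S 0 = 0 := by
  have := stMap_le_self hpos 0; omega

lemma stMap_add {M : ℕ} {S T : Finset ℕ} (hd : Disjoint S T) (hu : S ∪ T = ground M)
    {k : ℕ} (hk : k ≤ M) : stMap S k + stMap T k = k := by
  have h1 : S.filter (· ≤ k) ∪ T.filter (· ≤ k) = Finset.Icc 1 k := by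
    rw [← Finset.filter_union, hu]
    ext x
    simp only [Finset.mem_filter, mem_ground, Finset.mem_Icc]
    omega
  have h2 : Disjoint (S.filter (· ≤ k)) (T.filter (· ≤ k)) :=
    Finset.disjoint_filter_filter hd
  have h3 := Finset.card_union_of_disjoint h2
  rw [h1, Nat.card_Icc] at h3
  unfold stMap
  omega

lemma stMap_eq_self {S : Finset ℕ} (hpos : ∀ x ∈ S, 1 ≤ x) {k j : ℕ}
    (hseg : Finset.Icc 1 k ⊆ S) (hj : j ≤ k) : stMap S j = j := by
  have h : S.filter (· ≤ j) = Finset.Icc 1 j := by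
    ext x
    simp only [Finset.mem_filter, Finset.mem_Icc]
    constructor
    · rintro ⟨hx, hxj⟩; exact ⟨hpos x hx, hxj⟩
    · rintro ⟨h1, h2⟩; exact ⟨hseg (Finset.mem_Icc.mpr ⟨h1, by omega⟩), h2⟩
  rw [stMap, h, Nat.card_Icc]
  omega

lemma raiseMap_eq_get {S : Finset ℕ} {x : ℕ} (h1 : 1 ≤ x) (h2 : x ≤ S.card) :
    raiseMap S x = (S.sort (· ≤ ·)).get ⟨x - 1, by rw [Finset.length_sort]; omega⟩ := by
  rw [raiseMap, List.getD_eq_getElem _ _ (by rw [Finset.length_sort]; omega)]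
  simp [List.get_eq_getElem]

lemma raiseMap_default {S : Finset ℕ} {x : ℕ} (h : S.card < x) : raiseMap S x = 0 := by
  rw [raiseMap, List.getD_eq_getElem?_getD, List.getElem?_eq_none, Option.getD_none]
  rw [Finset.length_sort]; omega

lemma raiseMap_mem {S : Finset ℕ} {x : ℕ} (h1 : 1 ≤ x) (h2 : x ≤ S.card) :
    raiseMap S x ∈ S := by
  rw [raiseMap_eq_get h1 h2]
  exact (Finset.mem_sort _).mp (List.get_mem _ _)

/-- Key adjunction between `raiseMap` and `stMap`. -/
lemma raiseMap_le_iff {S : Finset ℕ} {x k : ℕ} (h1 : 1 ≤ x) (h2 : x ≤ S.card) :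
    raiseMap S x ≤ k ↔ x ≤ stMap S k := by
  set l := S.sort (· ≤ ·) with hl
  have hlen : l.length = S.card := Finset.length_sort _
  have hmono : StrictMono l.get := (Finset.sortedLT_sort S).strictMono_get
  have hx1 : x - 1 < l.length := by omega
  have hrm : raiseMap S x = l.get ⟨x - 1, hx1⟩ := raiseMap_eq_get h1 h2
  rw [hrm]
  constructor
  · intro hle
    have hsub : (Finset.range x).image (fun i => l.getD i 0) ⊆ S.filter (· ≤ k) := by
      intro y hy
      rcases Finset.mem_image.mp hy with ⟨i, hi, rfl⟩
      rw [Finset.mem_range] at hi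
      have hil : i < l.length := by omega
      rw [List.getD_eq_getElem _ _ hil]
      have hgi : l[i] = l.get ⟨i, hil⟩ := by simp [List.get_eq_getElem]
      rw [Finset.mem_filter, hgi]
      refine ⟨(Finset.mem_sort _).mp (List.get_mem _ _), ?_⟩
      calc l.get ⟨i, hil⟩ ≤ l.get ⟨x - 1, hx1⟩ := hmono.monotone (by simp; omega)
        _ ≤ k := hle
    have hcard : ((Finset.range x).image (fun i => l.getD i 0)).card = x := by
      rw [Finset.card_image_of_injOn, Finset.card_range]
      intro i hi j hj hij
      rw [Finset.mem_coe, Finset.mem_range] at hi hj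
      have hil : i < l.length := by omega
      have hjl : j < l.length := by omega
      have hij2 : l.getD i 0 = l.getD j 0 := hij
      rw [List.getD_eq_getElem _ _ hil, List.getD_eq_getElem _ _ hjl] at hij2
      have : l.get ⟨i, hil⟩ = l.get ⟨j, hjl⟩ := by simpa [List.get_eq_getElem] using hij2
      have := hmono.injective this
      simpa using this
    calc x = ((Finset.range x).image (fun i => l.getD i 0)).card := hcard.symm
      _ ≤ (S.filter (· ≤ k)).card := Finset.card_le_card hsub
  · intro hle
    by_contra hgt
    push_neg at hgt
    have hsub : S.filter (· ≤ k) ⊆ (Finset.range (x - 1)).image (fun i => l.getD i 0) := by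
      intro y hy
      rw [Finset.mem_filter] at hy
      have hyl : y ∈ l := (Finset.mem_sort _).mpr hy.1
      rcases List.mem_iff_get.mp hyl with ⟨⟨i, hil⟩, hgi⟩
      have hix : i < x - 1 := by
        by_contra hc
        push_neg at hc
        have : l.get ⟨x - 1, hx1⟩ ≤ l.get ⟨i, hil⟩ := hmono.monotone (by simp; omega)
        rw [hgi] at this
        omega
      refine Finset.mem_image.mpr ⟨i, Finset.mem_range.mpr hix, ?_⟩
      rw [List.getD_eq_getElem _ _ hil, ← hgi]
      simp [List.get_eq_getElem]
    have hcard : ((Finset.range (x - 1)).image (fun i => l.getD i 0)).card ≤ x - 1 :=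
      le_trans Finset.card_image_le (by rw [Finset.card_range])
    have := Finset.card_le_card hsub
    rw [stMap] at hle
    omega

lemma le_raiseMap {S : Finset ℕ} (hpos : ∀ x ∈ S, 1 ≤ x) {x : ℕ} (h1 : 1 ≤ x)
    (h2 : x ≤ S.card) : x ≤ raiseMap S x := by
  have h3 := (raiseMap_le_iff h1 h2).mp (le_refl _)
  have h4 := stMap_le_self hpos (raiseMap S x)
  omega

lemma raiseMap_id_segment {S : Finset ℕ} (hpos : ∀ x ∈ S, 1 ≤ x) {k x : ℕ}
    (hseg : Finset.Icc 1 k ⊆ S) (h1 : 1 ≤ x) (h2 : x ≤ k) : raiseMap S x = x := by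
  have hkcard : k ≤ S.card := by
    have := Finset.card_le_card hseg
    rw [Nat.card_Icc] at this
    omega
  have hle : raiseMap S x ≤ x := by
    rw [raiseMap_le_iff h1 (by omega), stMap_eq_self hpos hseg h2]
  have hge := le_raiseMap hpos h1 (by omega)
  omega

end SP14


namespace SP14

open Finset

lemma splitAt_raiseP {n : ℕ} {S : Finset ℕ} {A : Finset (Finset ℕ)} {k : ℕ}
    (hpos : ∀ x ∈ S, 1 ≤ x) (hn : S.card = n) (hA : IsSetPartition n A) :
    SplitAt (raiseP S A) k ↔ SplitAt A (stMap S k) := by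
  constructor
  · intro h b hb
    rcases h (b.image (raiseMap S)) (Finset.mem_image_of_mem _ hb) with h' | h'
    · refine Or.inl fun x hx => ?_
      have h1 := part_pos hA b hb x hx
      have h2 := part_le hA b hb x hx
      exact (raiseMap_le_iff h1 (by omega)).mp (h' _ (Finset.mem_image_of_mem _ hx))
    · refine Or.inr fun x hx => ?_
      have h1 := part_pos hA b hb x hx
      have h2 := part_le hA b hb x hx
      have h3 := h' _ (Finset.mem_image_of_mem _ hx)
      by_contra hc
      push_neg at hc
      have := (raiseMap_le_iff h1 (by omega)).mpr hc
      omega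
  · intro h b' hb'
    rcases Finset.mem_image.mp hb' with ⟨b, hb, rfl⟩
    rcases h b hb with h' | h'
    · refine Or.inl fun y hy => ?_
      rcases Finset.mem_image.mp hy with ⟨x, hx, rfl⟩
      have h1 := part_pos hA b hb x hx
      have h2 := part_le hA b hb x hx
      exact (raiseMap_le_iff h1 (by omega)).mpr (h' x hx)
    · refine Or.inr fun y hy => ?_
      rcases Finset.mem_image.mp hy with ⟨x, hx, rfl⟩
      have h1 := part_pos hA b hb x hx
      have h2 := part_le hA b hb x hx
      have h3 := h' x hx
      by_contra hc
      push_neg at hc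
      have := (raiseMap_le_iff h1 (by omega)).mp hc
      omega

lemma count_lemma (f g : ℕ → ℕ) (hf : Monotone f) (hg : Monotone g) :
    ∀ T : Finset ℕ, (∀ t ∈ T, f t + g t = t) → T.Nonempty →
      T.card + 1 ≤ (T.image f).card + (T.image g).card := by
  intro T
  induction T using Finset.strongInduction with
  | _ T ih =>
    intro hsum hne
    have hMT : T.max' hne ∈ T := T.max'_mem hne
    set M := T.max' hne with hM
    by_cases hT' : (T.erase M).Nonempty
    · have hsub : T.erase M ⊂ T := Finset.erase_ssubset hMT
      have ih' := ih _ hsub (fun t ht => hsum t (Finset.mem_of_mem_erase ht)) hT'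
      have hM'T : (T.erase M).max' hT' ∈ T.erase M := (T.erase M).max'_mem hT'
      set M' := (T.erase M).max' hT' with hM'
      have hM'lt : M' < M := by
        have h1 : M' ∈ T := Finset.mem_of_mem_erase hM'T
        have h2 : M' ≠ M := Finset.ne_of_mem_erase hM'T
        have h3 : M' ≤ M := Finset.le_max' T M' h1
        omega
      have hstep : f M' < f M ∨ g M' < g M := by
        have h1 := hsum M hMT
        have h2 := hsum M' (Finset.mem_of_mem_erase hM'T)
        have h3 := hf hM'lt.le
        have h4 := hg hM'lt.le
        omega
      have himg : ∀ h : ℕ → ℕ, Monotone h → h M' < h M →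
          ((T.erase M).image h).card + 1 ≤ (T.image h).card := by
        intro h hmono hlt
        have heq : T.image h = insert (h M) ((T.erase M).image h) := by
          conv_lhs => rw [← Finset.insert_erase hMT]
          rw [Finset.image_insert]
        rw [heq, Finset.card_insert_of_notMem]
        intro hmem
        rcases Finset.mem_image.mp hmem with ⟨t, ht, hth⟩
        have h5 : t ≤ M' := Finset.le_max' _ t ht
        have h6 := hmono h5
        omega
      have himg2 : ∀ h : ℕ → ℕ, ((T.erase M).image h).card ≤ (T.image h).card :=
        fun h => Finset.card_le_card (Finset.image_subset_image (Finset.erase_subset _ _))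
      have hcard : T.card = (T.erase M).card + 1 := by
        rw [Finset.card_erase_of_mem hMT]
        have : 1 ≤ T.card := Finset.card_pos.mpr hne
        omega
      rcases hstep with h | h
      · have h1 := himg f hf h
        have h2 := himg2 g
        omega
      · have h1 := himg g hg h
        have h2 := himg2 f
        omega
    · have hT1 : T = {M} := by
        rw [Finset.not_nonempty_iff_eq_empty] at hT'
        ext x
        simp only [Finset.mem_singleton]
        constructor
        · intro hx
          by_contra hc
          have : x ∈ T.erase M := Finset.mem_erase.mpr ⟨hc, hx⟩
          rw [hT'] at this
          exact absurd this (Finset.notMem_empty x)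
        · rintro rfl; exact hMT
      rw [hT1]
      simp

/-- The common setting: `S ⊔ T = [n+m]`, `|S| = n`, `|T| = m`. -/
lemma image_splits_subset {n m : ℕ} {A B : Finset (Finset ℕ)} {S T : Finset ℕ}
    (hu : S ∪ T = ground (n + m)) (hd : Disjoint S T) (hSc : S.card = n) (hTc : T.card = m)
    (hA : IsSetPartition n A) (hB : IsSetPartition m B) :
    (((Finset.Icc 0 (n + m)).filter
        (fun s => SplitAt (raiseP S A ∪ raiseP T B) s)).image (stMap S)) ⊆
      (Finset.Icc 0 n).filter (fun s => SplitAt A s) := by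
  have hpos : ∀ x ∈ S, 1 ≤ x := by
    intro x hx
    exact (mem_ground.mp (hu ▸ Finset.mem_union_left T hx)).1
  intro j hj
  rcases Finset.mem_image.mp hj with ⟨k, hk, rfl⟩
  rw [Finset.mem_filter, Finset.mem_Icc] at hk ⊢
  obtain ⟨⟨-, hkle⟩, hksplit⟩ := hk
  rw [splitAt_union] at hksplit
  refine ⟨⟨Nat.zero_le _, hSc ▸ stMap_le_card k⟩, ?_⟩
  exact (splitAt_raiseP hpos hSc hA).mp hksplit.1

lemma splitFin_eq {N : ℕ} {C : Finset (Finset ℕ)} {LC : List (ℕ × Finset (Finset ℕ))}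
    (hLC : AtomicFactorization N C LC) :
    (Finset.Icc 0 N).filter (fun s => SplitAt C s) = splitSet LC := by
  have h := splits_eq_splitSet hLC.1
  rw [hLC.2] at h
  exact h

lemma length_ineq {n m : ℕ} {A B : Finset (Finset ℕ)} {S T : Finset ℕ}
    (hu : S ∪ T = ground (n + m)) (hd : Disjoint S T) (hSc : S.card = n) (hTc : T.card = m)
    (hA : IsSetPartition n A) (hB : IsSetPartition m B)
    {LA LB LC : List (ℕ × Finset (Finset ℕ))}
    (hLA : AtomicFactorization n A LA) (hLB : AtomicFactorization m B LB)
    (hLC : AtomicFactorization (n + m) (raiseP S A ∪ raiseP T B) LC) :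
    LC.length ≤ LA.length + LB.length := by
  set TT := (Finset.Icc 0 (n + m)).filter (fun s => SplitAt (raiseP S A ∪ raiseP T B) s) with hTT
  have hTTcard : TT.card = LC.length + 1 := by
    rw [hTT, splitFin_eq hLC, card_splitSet hLC.1]
  have hsum : ∀ t ∈ TT, stMap S t + stMap T t = t := by
    intro t ht
    rw [hTT, Finset.mem_filter, Finset.mem_Icc] at ht
    exact stMap_add hd hu ht.1.2
  have hne : TT.Nonempty := by
    rw [hTT, splitFin_eq hLC]
    exact ⟨0, zero_mem_splitSet LC⟩
  have hcnt := count_lemma (stMap S) (stMap T) stMap_mono stMap_mono TT hsum hne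
  have h1 : (TT.image (stMap S)).card ≤ LA.length + 1 := by
    calc (TT.image (stMap S)).card
        ≤ ((Finset.Icc 0 n).filter (fun s => SplitAt A s)).card :=
          Finset.card_le_card (image_splits_subset hu hd hSc hTc hA hB)
      _ = LA.length + 1 := by rw [splitFin_eq hLA, card_splitSet hLA.1]
  have h2 : (TT.image (stMap T)).card ≤ LB.length + 1 := by
    have hu' : T ∪ S = ground (m + n) := by rw [Finset.union_comm, Nat.add_comm]; exact hu
    have hsub := image_splits_subset hu' hd.symm hTc hSc hB hA
    rw [Finset.union_comm (raiseP T B), Nat.add_comm m n] at hsub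
    calc (TT.image (stMap T)).card
        ≤ ((Finset.Icc 0 m).filter (fun s => SplitAt B s)).card := Finset.card_le_card hsub
      _ = LB.length + 1 := by rw [splitFin_eq hLB, card_splitSet hLB.1]
  omega

lemma dichotomy {n m : ℕ} {A B : Finset (Finset ℕ)} {S T : Finset ℕ}
    (hu : S ∪ T = ground (n + m)) (hd : Disjoint S T) (hSc : S.card = n) (hTc : T.card = m)
    (hA : IsSetPartition n A) (hB : IsSetPartition m B)
    {LA LB : List (ℕ × Finset (Finset ℕ))} {c : ℕ × Finset (Finset ℕ)}
    {LC' : List (ℕ × Finset (Finset ℕ))}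
    (hLA : AtomicFactorization n A LA) (hLB : AtomicFactorization m B LB)
    (hLC : AtomicFactorization (n + m) (raiseP S A ∪ raiseP T B) (c :: LC'))
    (heq : (c :: LC').length = LA.length + LB.length) :
    Finset.Icc 1 c.1 ⊆ S ∨ Finset.Icc 1 c.1 ⊆ T := by
  set TT := (Finset.Icc 0 (n + m)).filter (fun s => SplitAt (raiseP S A ∪ raiseP T B) s) with hTT
  have hTTeq : TT = splitSet (c :: LC') := splitFin_eq hLC
  have hk1pos : 0 < c.1 := (hLC.1 c List.mem_cons_self).2.1
  have hk1TT : c.1 ∈ TT := by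
    rw [hTTeq, splitSet]
    exact Finset.mem_insert.mpr (Or.inr (Finset.mem_image.mpr
      ⟨0, zero_mem_splitSet LC', by omega⟩))
  have hk1le : c.1 ≤ n + m := by
    have := hk1TT
    rw [hTT, Finset.mem_filter, Finset.mem_Icc] at this
    exact this.1.2
  have hsumk1 : stMap S c.1 + stMap T c.1 = c.1 := stMap_add hd hu hk1le
  -- suppose both `stMap S c.1 ≥ 1` and `stMap T c.1 ≥ 1`; derive a contradiction
  by_cases hcase : 1 ≤ stMap S c.1 ∧ 1 ≤ stMap T c.1
  · exfalso
    obtain ⟨hj, hi⟩ := hcase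
    set Tp := (splitSet LC').image (· + c.1) with hTp
    have hTpsub : Tp ⊆ TT := by
      rw [hTTeq, splitSet]
      exact Finset.subset_insert _ _
    have hTpcard : Tp.card = LC'.length + 1 := by
      rw [hTp, Finset.card_image_of_injective _ (add_left_injective c.1),
        card_splitSet (fun q hq => hLC.1 q (List.mem_cons_of_mem c hq))]
    have hTpne : Tp.Nonempty := ⟨0 + c.1, Finset.mem_image_of_mem _ (zero_mem_splitSet LC')⟩
    have hTpge : ∀ t ∈ Tp, c.1 ≤ t := by
      intro t ht
      rcases Finset.mem_image.mp ht with ⟨u, _, rfl⟩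
      omega
    have hsum : ∀ t ∈ Tp, stMap S t + stMap T t = t := by
      intro t ht
      have := hTpsub ht
      rw [hTT, Finset.mem_filter, Finset.mem_Icc] at this
      exact stMap_add hd hu this.1.2
    have hcnt := count_lemma (stMap S) (stMap T) stMap_mono stMap_mono Tp hsum hTpne
    have h1 : (Tp.image (stMap S)).card ≤ LA.length := by
      have hsub : Tp.image (stMap S) ⊆ (splitSet LA).erase 0 := by
        intro j hjm
        rcases Finset.mem_image.mp hjm with ⟨t, ht, rfl⟩
        refine Finset.mem_erase.mpr ⟨?_, ?_⟩
        · have := stMap_mono (S := S) (hTpge t ht)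
          omega
        · rw [← splitFin_eq hLA]
          exact image_splits_subset hu hd hSc hTc hA hB
            (Finset.mem_image_of_mem _ (hTpsub ht))
      calc (Tp.image (stMap S)).card ≤ ((splitSet LA).erase 0).card :=
            Finset.card_le_card hsub
        _ = LA.length := by
            rw [Finset.card_erase_of_mem (zero_mem_splitSet LA), card_splitSet hLA.1]
            simp
    have h2 : (Tp.image (stMap T)).card ≤ LB.length := by
      have hu' : T ∪ S = ground (m + n) := by rw [Finset.union_comm, Nat.add_comm]; exact hu
      have himg := image_splits_subset hu' hd.symm hTc hSc hB hA
      rw [Finset.union_comm (raiseP T B), Nat.add_comm m n] at himg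
      have hsub : Tp.image (stMap T) ⊆ (splitSet LB).erase 0 := by
        intro j hjm
        rcases Finset.mem_image.mp hjm with ⟨t, ht, rfl⟩
        refine Finset.mem_erase.mpr ⟨?_, ?_⟩
        · have := stMap_mono (S := T) (hTpge t ht)
          omega
        · rw [← splitFin_eq hLB]
          exact himg (Finset.mem_image_of_mem _ (hTpsub ht))
      calc (Tp.image (stMap T)).card ≤ ((splitSet LB).erase 0).card :=
            Finset.card_le_card hsub
        _ = LB.length := by
            rw [Finset.card_erase_of_mem (zero_mem_splitSet LB), card_splitSet hLB.1]
            simp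
    simp only [List.length_cons] at heq
    omega
  · -- one of the two is zero
    rw [not_and_or] at hcase
    rcases hcase with h0 | h0
    all_goals push_neg at h0
    · -- stMap S c.1 = 0, so Icc 1 c.1 ⊆ T
      refine Or.inr fun x hx => ?_
      rw [Finset.mem_Icc] at hx
      have hxg : x ∈ S ∪ T := by
        rw [hu, mem_ground]; omega
      rcases Finset.mem_union.mp hxg with hxS | hxT
      · exfalso
        have : x ∈ S.filter (· ≤ c.1) := Finset.mem_filter.mpr ⟨hxS, hx.2⟩
        have : 1 ≤ stMap S c.1 := Finset.card_pos.mpr ⟨x, this⟩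
        omega
      · exact hxT
    · refine Or.inl fun x hx => ?_
      rw [Finset.mem_Icc] at hx
      have hxg : x ∈ S ∪ T := by
        rw [hu, mem_ground]; omega
      rcases Finset.mem_union.mp hxg with hxS | hxT
      · exact hxS
      · exfalso
        have : x ∈ T.filter (· ≤ c.1) := Finset.mem_filter.mpr ⟨hxT, hx.2⟩
        have : 1 ≤ stMap T c.1 := Finset.card_pos.mpr ⟨x, this⟩
        omega

end SP14


namespace SP14

open Finset

lemma list_toFinset_map (l : List ℕ) (f : ℕ → ℕ) : (l.map f).toFinset = l.toFinset.image f := by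
  ext x; simp

lemma sort_image_shift {D : Finset ℕ} {k : ℕ} (hD : ∀ d ∈ D, k < d) :
    (D.image (· - k)).sort (· ≤ ·) = (D.sort (· ≤ ·)).map (· - k) := by
  haveI : IsAntisymm ℕ (· ≤ ·) := ⟨fun _ _ => le_antisymm⟩
  refine (fun hp h1 h2 => List.Perm.eq_of_pairwise' (r := (· ≤ ·)) h1 h2 hp) ?_ ?_ ?_
  · apply List.perm_of_nodup_nodup_toFinset_eq (Finset.sort_nodup _ _)
    · apply List.Nodup.map_on _ (Finset.sort_nodup _ _)
      intro x hx y hy hxy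
      have hx' := hD x ((Finset.mem_sort _).mp hx)
      have hy' := hD y ((Finset.mem_sort _).mp hy)
      omega
    · rw [list_toFinset_map, Finset.sort_toFinset, Finset.sort_toFinset]
  · exact Finset.pairwise_sort _ _
  · exact List.Pairwise.map _ (fun a b h => Nat.sub_le_sub_right h k)
      (Finset.pairwise_sort D (· ≤ ·))

lemma raiseMap_image_shift {D : Finset ℕ} {k : ℕ} (hD : ∀ d ∈ D, k < d) {x : ℕ}
    (h1 : 1 ≤ x) (h2 : x ≤ D.card) :
    raiseMap (D.image (· - k)) x = raiseMap D x - k := by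
  rw [raiseMap, raiseMap, sort_image_shift hD]
  have hlen : (D.sort (· ≤ ·)).length = D.card := Finset.length_sort _
  have hx : x - 1 < (D.sort (· ≤ ·)).length := by omega
  rw [List.getD_eq_getElem _ _ (by rw [List.length_map]; omega),
    List.getD_eq_getElem _ _ hx, List.getElem_map]

lemma seg_decomp {S : Finset ℕ} {k : ℕ} (hpos : ∀ x ∈ S, 1 ≤ x)
    (hseg : Finset.Icc 1 k ⊆ S) :
    S = Finset.Icc 1 k ∪ S.filter (fun y => k < y) ∧
      Disjoint (Finset.Icc 1 k) (S.filter (fun y => k < y)) := by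
  constructor
  · ext x
    simp only [Finset.mem_union, Finset.mem_Icc, Finset.mem_filter]
    constructor
    · intro hx
      by_cases hxk : x ≤ k
      · exact Or.inl ⟨hpos x hx, hxk⟩
      · exact Or.inr ⟨hx, by omega⟩
    · rintro (⟨ha, hb⟩ | ⟨hx, -⟩)
      · exact hseg (Finset.mem_Icc.mpr ⟨ha, hb⟩)
      · exact hx
  · rw [Finset.disjoint_left]
    intro x hx hx'
    have := (Finset.mem_Icc.mp hx).2
    have := (Finset.mem_filter.mp hx').2
    omega

lemma card_filter_high {S : Finset ℕ} {k : ℕ} (hpos : ∀ x ∈ S, 1 ≤ x)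
    (hseg : Finset.Icc 1 k ⊆ S) :
    S.card = k + (S.filter (fun y => k < y)).card := by
  obtain ⟨hdec, hdis⟩ := seg_decomp hpos hseg
  conv_lhs => rw [hdec]
  rw [Finset.card_union_of_disjoint hdis, Nat.card_Icc]
  omega

lemma sort_seg_append {S : Finset ℕ} {k : ℕ} (hpos : ∀ x ∈ S, 1 ≤ x)
    (hseg : Finset.Icc 1 k ⊆ S) :
    S.sort (· ≤ ·)
      = (Finset.Icc 1 k).sort (· ≤ ·) ++ (S.filter (fun y => k < y)).sort (· ≤ ·) := by
  haveI : IsAntisymm ℕ (· ≤ ·) := ⟨fun _ _ => le_antisymm⟩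
  refine (fun hp h1 h2 => List.Perm.eq_of_pairwise' (r := (· ≤ ·)) h1 h2 hp) ?_ ?_ ?_
  · apply List.perm_of_nodup_nodup_toFinset_eq (Finset.sort_nodup _ _)
    · refine List.Nodup.append (Finset.sort_nodup _ _) (Finset.sort_nodup _ _) ?_
      intro a ha hb
      rw [Finset.mem_sort] at ha hb
      have := (Finset.mem_Icc.mp ha).2
      have := (Finset.mem_filter.mp hb).2
      omega
    · rw [List.toFinset_append, Finset.sort_toFinset, Finset.sort_toFinset,
        Finset.sort_toFinset]
      exact (seg_decomp hpos hseg).1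
  · exact Finset.pairwise_sort _ _
  · rw [List.pairwise_append]
    refine ⟨Finset.pairwise_sort _ _, Finset.pairwise_sort _ _, ?_⟩
    intro a ha b hb
    rw [Finset.mem_sort] at ha hb
    have := (Finset.mem_Icc.mp ha).2
    have := (Finset.mem_filter.mp hb).2
    omega

lemma raiseMap_high {S : Finset ℕ} {k : ℕ} (hpos : ∀ x ∈ S, 1 ≤ x)
    (hseg : Finset.Icc 1 k ⊆ S) {x : ℕ} (hx1 : k < x) (hx2 : x ≤ S.card) :
    raiseMap S x = raiseMap ((S.filter (fun y => k < y)).image (· - k)) (x - k) + k := by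
  have hFhigh : ∀ d ∈ S.filter (fun y => k < y), k < d :=
    fun d hd => (Finset.mem_filter.mp hd).2
  have hcardS := card_filter_high hpos hseg
  have hFx : raiseMap S x = raiseMap (S.filter (fun y => k < y)) (x - k) := by
    rw [raiseMap, raiseMap, sort_seg_append hpos hseg, List.getD_append_right]
    · congr 1
      rw [Finset.length_sort, Nat.card_Icc]
      omega
    · rw [Finset.length_sort, Nat.card_Icc]
      omega
  have hmem : raiseMap (S.filter (fun y => k < y)) (x - k) ∈ S.filter (fun y => k < y) :=
    raiseMap_mem (by omega) (by omega)
  have := hFhigh _ hmem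
  rw [hFx, raiseMap_image_shift hFhigh (by omega) (by omega)]
  omega

lemma newST {n m k : ℕ} {S T : Finset ℕ}
    (hu : S ∪ T = ground (n + m)) (hd : Disjoint S T) (hSc : S.card = n) (hTc : T.card = m)
    (hseg : Finset.Icc 1 k ⊆ S) (hk : k ≤ n) :
    ((S.filter (fun y => k < y)).image (· - k)) ∪ (T.image (· - k)) = ground ((n - k) + m) ∧
    Disjoint ((S.filter (fun y => k < y)).image (· - k)) (T.image (· - k)) ∧
    ((S.filter (fun y => k < y)).image (· - k)).card = n - k ∧
    (T.image (· - k)).card = m ∧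
    (∀ t ∈ T, k < t) := by
  have hpos : ∀ x ∈ S ∪ T, 1 ≤ x := by
    intro x hx
    rw [hu] at hx
    exact (mem_ground.mp hx).1
  have hposS : ∀ x ∈ S, 1 ≤ x := fun x hx => hpos x (Finset.mem_union_left _ hx)
  have hThigh : ∀ t ∈ T, k < t := by
    intro t ht
    by_contra hc
    push_neg at hc
    have h1 : 1 ≤ t := hpos t (Finset.mem_union_right _ ht)
    have : t ∈ S := hseg (Finset.mem_Icc.mpr ⟨h1, hc⟩)
    exact Finset.disjoint_left.mp hd this ht
  have hFhigh : ∀ d ∈ S.filter (fun y => k < y), k < d :=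
    fun d hd => (Finset.mem_filter.mp hd).2
  refine ⟨?_, ?_, ?_, ?_, hThigh⟩
  · rw [← Finset.image_union]
    ext y
    simp only [Finset.mem_image, Finset.mem_union, mem_ground]
    constructor
    · rintro ⟨x, hx, rfl⟩
      have hx1 : k < x := by
        rcases hx with hx | hx
        · exact hFhigh x hx
        · exact hThigh x hx
      have hx2 : x ≤ n + m := by
        have : x ∈ ground (n + m) := by
          rw [← hu]
          rcases hx with hx | hx
          · exact Finset.mem_union_left _ (Finset.mem_filter.mp hx).1
          · exact Finset.mem_union_right _ hx
        exact (mem_ground.mp this).2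
      omega
    · rintro ⟨hy1, hy2⟩
      have hyk : y + k ∈ S ∪ T := by
        rw [hu, mem_ground]
        omega
      rcases Finset.mem_union.mp hyk with hx | hx
      · exact ⟨y + k, Or.inl (Finset.mem_filter.mpr ⟨hx, by omega⟩), by omega⟩
      · exact ⟨y + k, Or.inr hx, by omega⟩
  · rw [Finset.disjoint_left]
    intro y hy hy'
    rcases Finset.mem_image.mp hy with ⟨s, hs, hsy⟩
    rcases Finset.mem_image.mp hy' with ⟨t, ht, hty⟩
    have h1 := hFhigh s hs
    have h2 := hThigh t ht
    have : s = t := by omega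
    exact Finset.disjoint_left.mp hd (Finset.mem_filter.mp hs).1 (this ▸ ht)
  · rw [Finset.card_image_of_injOn]
    · have := card_filter_high hposS hseg
      omega
    · intro a ha b hb hab
      rw [Finset.mem_coe] at ha hb
      have hab2 : a - k = b - k := hab
      have := hFhigh a ha
      have := hFhigh b hb
      omega
  · rw [Finset.card_image_of_injOn, hTc]
    intro a ha b hb hab
    rw [Finset.mem_coe] at ha hb
    have hab2 : a - k = b - k := hab
    have := hThigh a ha
    have := hThigh b hb
    omega

end SP14


namespace SP14

open Finset

lemma partition_filter_decomp {k : ℕ} {A : Finset (Finset ℕ)}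
    (hsplit : SplitAt A k) :
    A = A.filter (fun b => ∀ x ∈ b, x ≤ k) ∪ A.filter (fun b => ∀ x ∈ b, k < x) := by
  ext b
  simp only [Finset.mem_union, Finset.mem_filter]
  constructor
  · intro hb
    rcases hsplit b hb with h | h
    · exact Or.inl ⟨hb, h⟩
    · exact Or.inr ⟨hb, h⟩
  · rintro (⟨hb, -⟩ | ⟨hb, -⟩) <;> exact hb

lemma filter_not_eq_filter_high {n k : ℕ} {A : Finset (Finset ℕ)} (hA : IsSetPartition n A)
    (hsplit : SplitAt A k) :
    A.filter (fun b => ¬ ∀ x ∈ b, x ≤ k) = A.filter (fun b => ∀ x ∈ b, k < x) := by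
  apply Finset.filter_congr
  intro b hb
  constructor
  · intro h
    rcases hsplit b hb with h' | h'
    · exact absurd h' h
    · exact h'
  · intro h hle
    rcases hA.1 b hb with ⟨x, hx⟩
    have := h x hx
    have := hle x hx
    omega

lemma raiseP_union (S : Finset ℕ) (X Y : Finset (Finset ℕ)) :
    raiseP S (X ∪ Y) = raiseP S X ∪ raiseP S Y := Finset.image_union _ _

lemma shiftP_union (k : ℕ) (X Y : Finset (Finset ℕ)) :
    shiftP k (X ∪ Y) = shiftP k X ∪ shiftP k Y := Finset.image_union _ _

lemma struct_decomp {n m k : ℕ} {A B : Finset (Finset ℕ)} {S T : Finset ℕ}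
    (hu : S ∪ T = ground (n + m)) (hd : Disjoint S T) (hSc : S.card = n) (hTc : T.card = m)
    (hA : IsSetPartition n A) (hB : IsSetPartition m B)
    (hseg : Finset.Icc 1 k ⊆ S) (hk : k ≤ n) (hsplit : SplitAt A k) :
    raiseP S A ∪ raiseP T B
      = (A.filter (fun b => ∀ x ∈ b, x ≤ k))
        ∪ shiftP k (raiseP ((S.filter (fun y => k < y)).image (· - k))
            ((A.filter (fun b => ∀ x ∈ b, k < x)).image (fun b => b.image (· - k)))
          ∪ raiseP (T.image (· - k)) B) := by
  have hpos : ∀ x ∈ S ∪ T, 1 ≤ x := by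
    intro x hx
    rw [hu] at hx
    exact (mem_ground.mp hx).1
  have hposS : ∀ x ∈ S, 1 ≤ x := fun x hx => hpos x (Finset.mem_union_left _ hx)
  have hThigh : ∀ t ∈ T, k < t := by
    intro t ht
    by_contra hc
    push_neg at hc
    have h1 : 1 ≤ t := hpos t (Finset.mem_union_right _ ht)
    have : t ∈ S := hseg (Finset.mem_Icc.mpr ⟨h1, hc⟩)
    exact Finset.disjoint_left.mp hd this ht
  have ha : raiseP S (A.filter (fun b => ∀ x ∈ b, x ≤ k))
      = A.filter (fun b => ∀ x ∈ b, x ≤ k) := by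
    rw [raiseP]
    calc (A.filter (fun b => ∀ x ∈ b, x ≤ k)).image (fun b => b.image (raiseMap S))
        = (A.filter (fun b => ∀ x ∈ b, x ≤ k)).image id := by
          apply Finset.image_congr
          intro b hb
          obtain ⟨hbA, hble⟩ := Finset.mem_filter.mp hb
          simp only [id]
          calc b.image (raiseMap S) = b.image id := by
                apply Finset.image_congr
                intro x hx
                simp only [id]
                exact raiseMap_id_segment hposS hseg (part_pos hA b hbA x hx) (hble x hx)
            _ = b := Finset.image_id
      _ = A.filter (fun b => ∀ x ∈ b, x ≤ k) := Finset.image_id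
  have hb' : raiseP S (A.filter (fun b => ∀ x ∈ b, k < x))
      = shiftP k (raiseP ((S.filter (fun y => k < y)).image (· - k))
          ((A.filter (fun b => ∀ x ∈ b, k < x)).image (fun b => b.image (· - k)))) := by
    rw [raiseP, raiseP, shiftP, Finset.image_image, Finset.image_image]
    apply Finset.image_congr
    intro b hb
    obtain ⟨hbA, hbhigh⟩ := Finset.mem_filter.mp hb
    simp only [Function.comp]
    rw [Finset.image_image, Finset.image_image]
    apply Finset.image_congr
    intro x hx
    simp only [Function.comp]
    have h1 := part_pos hA b hbA x hx
    have h2 := part_le hA b hbA x hx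
    have h3 := hbhigh x hx
    have := raiseMap_high hposS hseg h3 (by omega : x ≤ S.card)
    omega
  have hc : raiseP T B = shiftP k (raiseP (T.image (· - k)) B) := by
    rw [raiseP, raiseP, shiftP, Finset.image_image]
    apply Finset.image_congr
    intro b hb
    simp only [Function.comp]
    rw [Finset.image_image]
    apply Finset.image_congr
    intro x hx
    simp only [Function.comp]
    have h1 := part_pos hB b hb x hx
    have h2 := part_le hB b hb x hx
    have h4 := raiseMap_image_shift hThigh h1 (by omega : x ≤ T.card)
    have h5 : raiseMap T x ∈ T := raiseMap_mem h1 (by omega)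
    have h6 := hThigh _ h5
    omega
  conv_lhs => rw [partition_filter_decomp hsplit, raiseP_union, ha, hb', hc]
  rw [shiftP_union, Finset.union_assoc]

end SP14


namespace SP14

open Finset

lemma factorization_isPartition {N : ℕ} {C : Finset (Finset ℕ)}
    {L : List (ℕ × Finset (Finset ℕ))} (hL : AtomicFactorization N C L) :
    IsSetPartition N C := by
  have h := concatListP_isPartition hL.1
  rw [hL.2] at h
  exact h

lemma raiseP_pos {q : ℕ} {S : Finset ℕ} {A : Finset (Finset ℕ)}
    (hpos : ∀ x ∈ S, 1 ≤ x) (hq : S.card = q) (hA : IsSetPartition q A) :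
    (∀ b ∈ raiseP S A, b.Nonempty) ∧ (∀ b ∈ raiseP S A, ∀ x ∈ b, 1 ≤ x) := by
  constructor
  · intro b hb
    rcases Finset.mem_image.mp hb with ⟨b₀, hb₀, rfl⟩
    exact (hA.1 b₀ hb₀).image _
  · intro b hb x hx
    rcases Finset.mem_image.mp hb with ⟨b₀, hb₀, rfl⟩
    rcases Finset.mem_image.mp hx with ⟨y, hy, rfl⟩
    have h1 := part_pos hA b₀ hb₀ y hy
    have h2 := part_le hA b₀ hb₀ y hy
    exact hpos _ (raiseMap_mem h1 (by omega))

lemma peel {n m : ℕ} {A B : Finset (Finset ℕ)} {S T : Finset ℕ}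
    {LA LB LC' : List (ℕ × Finset (Finset ℕ))} {c : ℕ × Finset (Finset ℕ)}
    (hu : S ∪ T = ground (n + m)) (hd : Disjoint S T) (hSc : S.card = n) (hTc : T.card = m)
    (hLA : AtomicFactorization n A LA) (hLB : AtomicFactorization m B LB)
    (hLC : AtomicFactorization (n + m) (raiseP S A ∪ raiseP T B) (c :: LC'))
    (hseg : Finset.Icc 1 c.1 ⊆ S) :
    ∃ LA' : List (ℕ × Finset (Finset ℕ)),
      LA = c :: LA' ∧
      AtomicFactorization (n - c.1) (concatListP LA').2 LA' ∧
      ((S.filter (fun y => c.1 < y)).image (· - c.1)) ∪ (T.image (· - c.1))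
          = ground ((n - c.1) + m) ∧
      Disjoint ((S.filter (fun y => c.1 < y)).image (· - c.1)) (T.image (· - c.1)) ∧
      ((S.filter (fun y => c.1 < y)).image (· - c.1)).card = n - c.1 ∧
      (T.image (· - c.1)).card = m ∧
      AtomicFactorization ((n - c.1) + m)
        (raiseP ((S.filter (fun y => c.1 < y)).image (· - c.1)) (concatListP LA').2
          ∪ raiseP (T.image (· - c.1)) B) LC' := by
  have hA : IsSetPartition n A := factorization_isPartition hLA
  have hB : IsSetPartition m B := factorization_isPartition hLB
  have hposS : ∀ x ∈ S, 1 ≤ x := by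
    intro x hx
    exact (mem_ground.mp (hu ▸ Finset.mem_union_left T hx)).1
  have hcatom : AtomicP c.1 c.2 := hLC.1 c List.mem_cons_self
  have hk1 : 0 < c.1 := hcatom.2.1
  have hkTT : c.1 ∈ (Finset.Icc 0 (n + m)).filter
      (fun s => SplitAt (raiseP S A ∪ raiseP T B) s) := by
    rw [splitFin_eq hLC, splitSet]
    exact Finset.mem_insert.mpr (Or.inr (Finset.mem_image.mpr
      ⟨0, zero_mem_splitSet LC', by omega⟩))
  rw [Finset.mem_filter, Finset.mem_Icc] at hkTT
  obtain ⟨⟨-, hkle⟩, hksplitC⟩ := hkTT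
  have hstSk : stMap S c.1 = c.1 := stMap_eq_self hposS hseg (le_refl c.1)
  have hkn : c.1 ≤ n := by
    have := stMap_le_card (S := S) c.1
    omega
  have hsplitA : SplitAt A c.1 := by
    rw [splitAt_union] at hksplitC
    have := (splitAt_raiseP hposS hSc hA).mp hksplitC.1
    rwa [hstSk] at this
  cases hLAnil : LA with
  | nil =>
      exfalso
      rw [hLAnil] at hLA
      have h := hLA.2
      rw [concatListP] at h
      have hn0 : (0 : ℕ) = n := congrArg Prod.fst h
      omega
  | cons aA LA' =>
  rw [hLAnil] at hLA
  have haAatom : AtomicP aA.1 aA.2 := hLA.1 aA List.mem_cons_self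
  have hA₂part : IsSetPartition (concatListP LA').1 (concatListP LA').2 :=
    concatListP_isPartition (fun q hq => hLA.1 q (List.mem_cons_of_mem aA hq))
  have hdecA := hLA.2
  rw [concatListP] at hdecA
  have hnA : (concatListP LA').1 + aA.1 = n := congrArg Prod.fst hdecA
  have hAeq : aA.2 ∪ shiftP aA.1 (concatListP LA').2 = A := congrArg Prod.snd hdecA
  have hkA : aA.1 = c.1 := by
    have hkA_le : aA.1 ≤ c.1 := by
      have hkmem : c.1 ∈ splitSet (aA :: LA') := by
        rw [← splitFin_eq ⟨hLA.1, hLA.2⟩, Finset.mem_filter, Finset.mem_Icc]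
        exact ⟨⟨Nat.zero_le _, hkn⟩, hsplitA⟩
      rw [splitSet] at hkmem
      rcases Finset.mem_insert.mp hkmem with h0 | himg
      · omega
      · rcases Finset.mem_image.mp himg with ⟨u, -, hu'⟩
        omega
    have hkAatompos : 0 < aA.1 := haAatom.2.1
    have hsegA : Finset.Icc 1 aA.1 ⊆ S := fun x hx => by
      rw [Finset.mem_Icc] at hx
      exact hseg (Finset.mem_Icc.mpr ⟨hx.1, by omega⟩)
    have hstSkA : stMap S aA.1 = aA.1 := stMap_eq_self hposS hsegA (le_refl _)
    have hstTkA : stMap T aA.1 = 0 := by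
      have := stMap_add hd hu (k := aA.1) (by omega)
      omega
    have hsplitAkA : SplitAt A aA.1 := by
      have hmem : aA.1 ∈ splitSet (aA :: LA') := by
        rw [splitSet]
        exact Finset.mem_insert.mpr (Or.inr (Finset.mem_image.mpr
          ⟨0, zero_mem_splitSet LA', by omega⟩))
      rw [← splitFin_eq ⟨hLA.1, hLA.2⟩, Finset.mem_filter] at hmem
      exact hmem.2
    have hsplitCkA : SplitAt (raiseP S A ∪ raiseP T B) aA.1 := by
      rw [splitAt_union]
      constructor
      · rw [splitAt_raiseP hposS hSc hA, hstSkA]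
        exact hsplitAkA
      · have hposT : ∀ x ∈ T, 1 ≤ x := by
          intro x hx
          exact (mem_ground.mp (hu ▸ Finset.mem_union_right S hx)).1
        rw [splitAt_raiseP hposT hTc hB, hstTkA]
        exact splitAt_zero (part_pos hB)
    have hkAmemC : aA.1 ∈ splitSet (c :: LC') := by
      rw [← splitFin_eq hLC, Finset.mem_filter, Finset.mem_Icc]
      exact ⟨⟨Nat.zero_le _, by omega⟩, hsplitCkA⟩
    rw [splitSet] at hkAmemC
    rcases Finset.mem_insert.mp hkAmemC with h0 | himg
    · omega
    · rcases Finset.mem_image.mp himg with ⟨u, -, hu'⟩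
      omega
  -- head/tail of A
  have hheadA := head_filter_eq (k := c.1)
    (fun b hb x hx => by
      have := part_le haAatom.1 b hb x hx
      omega)
    hA₂part.1 (part_pos hA₂part)
  rw [← hkA] at hheadA
  rw [hAeq] at hheadA
  rw [hkA] at hheadA
  obtain ⟨hAfiltlow, hAfilthigh⟩ := hheadA
  -- head/tail of C
  have hC₂part : IsSetPartition (concatListP LC').1 (concatListP LC').2 :=
    concatListP_isPartition (fun q hq => hLC.1 q (List.mem_cons_of_mem c hq))
  have hdecC := hLC.2
  rw [concatListP] at hdecC
  have hnC : (concatListP LC').1 + c.1 = n + m := congrArg Prod.fst hdecC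
  have hCeq : c.2 ∪ shiftP c.1 (concatListP LC').2 = raiseP S A ∪ raiseP T B :=
    congrArg Prod.snd hdecC
  have hheadC := head_filter_eq (k := c.1)
    (fun b hb x hx => by
      have := part_le hcatom.1 b hb x hx
      omega)
    hC₂part.1 (part_pos hC₂part)
  rw [hCeq] at hheadC
  obtain ⟨hCfiltlow, hCfilthigh⟩ := hheadC
  -- the structural decomposition of C
  obtain ⟨hu', hd', hSc', hTc', hThigh⟩ := newST hu hd hSc hTc hseg hkn
  have hstruct := struct_decomp hu hd hSc hTc hA hB hseg hkn hsplitA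
  have hA₂eq : (A.filter (fun b => ∀ x ∈ b, c.1 < x)).image (fun b => b.image (· - c.1))
      = (concatListP LA').2 := by
    rw [← filter_not_eq_filter_high hA hsplitA]
    exact hAfilthigh
  rw [hA₂eq] at hstruct
  have hNA' : (concatListP LA').1 = n - c.1 := by omega
  have hA₂part' : IsSetPartition (n - c.1) (concatListP LA').2 := by
    rw [← hNA']
    exact hA₂part
  have hposS' : ∀ x ∈ (S.filter (fun y => c.1 < y)).image (· - c.1), 1 ≤ x := by
    intro x hx
    rcases Finset.mem_image.mp hx with ⟨s, hs, rfl⟩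
    have := (Finset.mem_filter.mp hs).2
    omega
  have hposT' : ∀ x ∈ T.image (· - c.1), 1 ≤ x := by
    intro x hx
    rcases Finset.mem_image.mp hx with ⟨t, ht, rfl⟩
    have := hThigh t ht
    omega
  have hUne := raiseP_pos hposS' hSc' hA₂part'
  have hUne2 := raiseP_pos hposT' hTc' hB
  have hheadS := head_filter_eq (k := c.1)
    (a := A.filter (fun b => ∀ x ∈ b, x ≤ c.1))
    (D := raiseP ((S.filter (fun y => c.1 < y)).image (· - c.1)) (concatListP LA').2
      ∪ raiseP (T.image (· - c.1)) B)
    (fun b hb => (Finset.mem_filter.mp hb).2)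
    (fun b hb => by
      rcases Finset.mem_union.mp hb with hb | hb
      · exact hUne.1 b hb
      · exact hUne2.1 b hb)
    (fun b hb => by
      rcases Finset.mem_union.mp hb with hb | hb
      · exact hUne.2 b hb
      · exact hUne2.2 b hb)
  rw [← hstruct] at hheadS
  obtain ⟨hSfiltlow, hSfilthigh⟩ := hheadS
  have hc2 : c.2 = aA.2 := by
    rw [← hCfiltlow, hSfiltlow, hAfiltlow]
  have hcaA : c = aA := Prod.ext hkA.symm hc2
  have hC₂eq : (concatListP LC').2
      = raiseP ((S.filter (fun y => c.1 < y)).image (· - c.1)) (concatListP LA').2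
        ∪ raiseP (T.image (· - c.1)) B := by
    rw [← hCfilthigh, hSfilthigh]
  refine ⟨LA', by rw [hcaA], ⟨fun q hq => hLA.1 q (List.mem_cons_of_mem aA hq), ?_⟩,
    hu', hd', hSc', hTc',
    ⟨fun q hq => hLC.1 q (List.mem_cons_of_mem c hq), ?_⟩⟩
  · have h1 : concatListP LA' = ((concatListP LA').1, (concatListP LA').2) := rfl
    rw [h1, hNA']
  · have h1 : concatListP LC' = ((concatListP LC').1, (concatListP LC').2) := rfl
    have h2 : (concatListP LC').1 = (n - c.1) + m := by omega
    rw [h1, h2, hC₂eq]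

end SP14


namespace SP14

open Finset

lemma isShuffle_length {α : Type*} {l₁ l₂ l : List α} (h : IsShuffle l₁ l₂ l) :
    l.length = l₁.length + l₂.length := by
  induction h with
  | nil => simp
  | left _ ih => simp only [List.length_cons, ih]; omega
  | right _ ih => simp only [List.length_cons, ih]; omega

lemma atoms_nil_of_zero {L : List (ℕ × Finset (Finset ℕ))}
    (h : ∀ p ∈ L, AtomicP p.1 p.2) (h0 : (concatListP L).1 = 0) : L = [] := by
  cases L with
  | nil => rfl
  | cons p L' =>
      exfalso
      have hp := (h p List.mem_cons_self).2.1
      rw [concatListP] at h0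
      simp only at h0
      omega

lemma main_aux : ∀ (LC : List (ℕ × Finset (Finset ℕ))) {n m : ℕ}
    {A B : Finset (Finset ℕ)} {S T : Finset ℕ}
    {LA LB : List (ℕ × Finset (Finset ℕ))},
    S ∪ T = ground (n + m) → Disjoint S T → S.card = n → T.card = m →
    AtomicFactorization n A LA → AtomicFactorization m B LB →
    AtomicFactorization (n + m) (raiseP S A ∪ raiseP T B) LC →
    LC.length = LA.length + LB.length →
    IsShuffle LA LB LC := by
  intro LC
  induction LC with
  | nil =>
      intro n m A B S T LA LB hu hd hSc hTc hLA hLB hLC heq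
      have h1 : LA = [] := List.length_eq_zero_iff.mp (by simp at heq; omega)
      have h2 : LB = [] := List.length_eq_zero_iff.mp (by simp at heq; omega)
      subst h1; subst h2
      exact IsShuffle.nil
  | cons c LC' ih =>
      intro n m A B S T LA LB hu hd hSc hTc hLA hLB hLC heq
      rcases dichotomy hu hd hSc hTc (factorization_isPartition hLA)
        (factorization_isPartition hLB) hLA hLB hLC heq with hseg | hseg
      · obtain ⟨LA', hLAeq, hLA', hu', hd', hSc', hTc', hLC'⟩ :=
          peel hu hd hSc hTc hLA hLB hLC hseg
        subst hLAeq
        have heq' : LC'.length = LA'.length + LB.length := by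
          simp only [List.length_cons] at heq
          omega
        exact IsShuffle.left (ih hu' hd' hSc' hTc' hLA' hLB hLC' heq')
      · have huT : T ∪ S = ground (m + n) := by
          rw [Finset.union_comm, Nat.add_comm]
          exact hu
        have hLCT : AtomicFactorization (m + n) (raiseP T B ∪ raiseP S A) (c :: LC') := by
          rw [Finset.union_comm (raiseP T B), Nat.add_comm m n]
          exact hLC
        obtain ⟨LB', hLBeq, hLB', hu', hd', hTc', hSc', hLC'⟩ :=
          peel huT hd.symm hTc hSc hLB hLA hLCT hseg
        subst hLBeq
        have hu'' : (S.image (· - c.1)) ∪ ((T.filter (fun y => c.1 < y)).image (· - c.1))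
            = ground (n + (m - c.1)) := by
          rw [Finset.union_comm, Nat.add_comm]
          exact hu'
        have hLC'' : AtomicFactorization (n + (m - c.1))
            (raiseP (S.image (· - c.1)) A
              ∪ raiseP ((T.filter (fun y => c.1 < y)).image (· - c.1)) (concatListP LB').2)
            LC' := by
          rw [Finset.union_comm (raiseP (S.image (· - c.1)) A), Nat.add_comm n (m - c.1)]
          exact hLC'
        have heq' : LC'.length = LA.length + LB'.length := by
          simp only [List.length_cons] at heq
          omega
        exact IsShuffle.right (ih hu'' hd'.symm hSc' hTc' hLA hLB' hLC'' heq')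

end SP14


/-- for set partitions `A ⊢ [n]`, `B ⊢ [m]` and any `n`-element subset `S` of
`[n+m]`, the atomic length satisfies `ℓ((A↑_S ∪ B↑_{Sᶜ})^!) ≤ ℓ(A^!) + ℓ(B^!)`, with
equality iff `(A↑_S ∪ B↑_{Sᶜ})^!` is a shuffle of the words `A^!` and `B^!`. -/
theorem atomic_length_shuffle (n m : ℕ) (A B : Finset (Finset ℕ)) (S : Finset ℕ)
    (hA : IsSetPartition n A) (hB : IsSetPartition m B)
    (hS : S ⊆ ground (n + m)) (hcard : S.card = n)
    (LA LB LC : List (ℕ × Finset (Finset ℕ)))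
    (hLA : AtomicFactorization n A LA) (hLB : AtomicFactorization m B LB)
    (hLC : AtomicFactorization (n + m)
      (raiseP S A ∪ raiseP (ground (n + m) \ S) B) LC) :
    LC.length ≤ LA.length + LB.length ∧
      (LC.length = LA.length + LB.length ↔ IsShuffle LA LB LC) := by
  have hu : S ∪ (ground (n + m) \ S) = ground (n + m) := Finset.union_sdiff_of_subset hS
  have hd : Disjoint S (ground (n + m) \ S) := Finset.disjoint_sdiff
  have hTc : (ground (n + m) \ S).card = m := by
    rw [Finset.card_sdiff_of_subset hS, hcard, ground, Nat.card_Icc]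
    omega
  refine ⟨SP14.length_ineq hu hd hcard hTc hA hB hLA hLB hLC, ?_, ?_⟩
  · intro h
    exact SP14.main_aux LC hu hd hcard hTc hLA hLB hLC h
  · intro h
    exact SP14.isShuffle_length h

end
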